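/- Suppose {A_i}_{i∈I} and {B_i}_{i∈I} are irreducible families of normal n×n complex matrices, and S is an invertible n×n complex matrix with S^{-1} A_i S = B_i for all i ∈ I. Then S is a scalar multiple of a unitary matrix. -/

import Mathlib

open Matrix

namespace Stmt13Aux

open scoped ComplexOrder

variable {n : ℕ}

private lemma dot_eq (M : Matrix (Fin n) (Fin n) ℂ) (x : Fin n → ℂ) :
    star (M *ᵥ x) ⬝ᵥ (M *ᵥ x) = (star x ᵥ* (Mᴴ * M)) ⬝ᵥ x := by
  rw [star_mulVec, dotProduct_mulVec, vecMul_vecMul]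

private lemma aux1 {N : Matrix (Fin n) (Fin n) ℂ} (hN : N * Nᴴ = Nᴴ * N)
    {x : Fin n → ℂ} (h : N *ᵥ x = 0) : Nᴴ *ᵥ x = 0 := by
  apply dotProduct_star_self_eq_zero.mp
  calc star (Nᴴ *ᵥ x) ⬝ᵥ (Nᴴ *ᵥ x) = (star x ᵥ* ((Nᴴ)ᴴ * Nᴴ)) ⬝ᵥ x := dot_eq _ _
    _ = (star x ᵥ* (Nᴴ * N)) ⬝ᵥ x := by rw [conjTranspose_conjTranspose, hN]
    _ = star (N *ᵥ x) ⬝ᵥ (N *ᵥ x) := (dot_eq _ _).symm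
    _ = 0 := by rw [h]; simp

private lemma aux2 {N : Matrix (Fin n) (Fin n) ℂ} (hN : N * Nᴴ = Nᴴ * N)
    {x : Fin n → ℂ} (h : N *ᵥ (N *ᵥ x) = 0) : N *ᵥ x = 0 := by
  have h1 : Nᴴ *ᵥ (N *ᵥ x) = 0 := aux1 hN h
  apply dotProduct_star_self_eq_zero.mp
  have h2 : star (N *ᵥ x) ⬝ᵥ (N *ᵥ x) = star x ⬝ᵥ (Nᴴ *ᵥ (N *ᵥ x)) := by
    rw [star_mulVec, ← dotProduct_mulVec]
  rw [h2, h1, dotProduct_zero]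

private lemma aux3 {N : Matrix (Fin n) (Fin n) ℂ} (hN : N * Nᴴ = Nᴴ * N) :
    ∀ (k : ℕ) (x : Fin n → ℂ), (N ^ (k + 1)) *ᵥ x = 0 → N *ᵥ x = 0 := by
  intro k
  induction k with
  | zero => intro x h; simpa using h
  | succ m ih =>
    intro x h
    apply ih
    have hp : N ^ (m + 1 + 1) = N * N * N ^ m := by
      rw [pow_succ', pow_succ', ← mul_assoc]
    have h2 : N *ᵥ (N *ᵥ ((N ^ m) *ᵥ x)) = 0 := by
      rw [mulVec_mulVec, mulVec_mulVec, ← hp]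
      exact h
    have := aux2 hN h2
    rwa [mulVec_mulVec, ← pow_succ'] at this

private lemma normal_sub_smul {M : Matrix (Fin n) (Fin n) ℂ} (hM : M * Mᴴ = Mᴴ * M) (μ : ℂ) :
    (M - μ • 1) * (M - μ • 1)ᴴ = (M - μ • 1)ᴴ * (M - μ • 1) := by
  have h : Commute (M - μ • 1) ((M - μ • 1)ᴴ) := by
    rw [conjTranspose_sub, conjTranspose_smul, conjTranspose_one]
    exact ((show Commute M Mᴴ from hM).sub_right
        ((Commute.one_right M).smul_right _)).sub_left
      (((Commute.one_left Mᴴ).smul_left μ).sub_right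
        (((Commute.one_left (1 : Matrix (Fin n) (Fin n) ℂ)).smul_left μ).smul_right _))
  exact h

private lemma adj_eigen {M : Matrix (Fin n) (Fin n) ℂ} (hM : M * Mᴴ = Mᴴ * M) {μ : ℂ}
    {x : Fin n → ℂ} (h : M *ᵥ x = μ • x) : Mᴴ *ᵥ x = (starRingEnd ℂ μ) • x := by
  have hz : (M - μ • 1) *ᵥ x = 0 := by
    rw [sub_mulVec, h, smul_mulVec, one_mulVec, sub_self]
  have := aux1 (normal_sub_smul hM μ) hz
  rw [conjTranspose_sub, conjTranspose_smul, conjTranspose_one, sub_mulVec,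
    smul_mulVec, one_mulVec, sub_eq_zero] at this
  exact this

private lemma mulVecLin_pow (N : Matrix (Fin n) (Fin n) ℂ) (k : ℕ) :
    (N ^ k).mulVecLin = (N.mulVecLin) ^ k := by
  induction k with
  | zero => rw [pow_zero, pow_zero, Matrix.mulVecLin_one]; rfl
  | succ m ih => rw [pow_succ, pow_succ, Matrix.mulVecLin_mul, ih]; rfl

/-- Fuglede–Putnam for similar normal matrices. -/
private lemma fuglede {A B S : Matrix (Fin n) (Fin n) ℂ}
    (hA : A * Aᴴ = Aᴴ * A) (hB : B * Bᴴ = Bᴴ * B) (hAS : A * S = S * B) :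
    Aᴴ * S = S * Bᴴ := by
  set f := B.mulVecLin with hf
  have key : ∀ x : Fin n → ℂ, (Aᴴ * S - S * Bᴴ) *ᵥ x = 0 := by
    intro x
    have hx : x ∈ LinearMap.ker ((Aᴴ * S - S * Bᴴ).mulVecLin) := by
      have htop := Module.End.iSup_maxGenEigenspace_eq_top f
      have hle : (⊤ : Submodule ℂ (Fin n → ℂ)) ≤
          LinearMap.ker ((Aᴴ * S - S * Bᴴ).mulVecLin) := by
        rw [← htop]
        apply iSup_le
        intro μ y hy
        rw [Module.End.mem_maxGenEigenspace] at hy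
        obtain ⟨k, hk⟩ := hy
        have hrw : f - μ • (1 : Module.End ℂ (Fin n → ℂ)) = (B - μ • 1).mulVecLin := by
          refine LinearMap.ext fun v => ?_
          simp [hf, Matrix.sub_mulVec, Matrix.smul_mulVec, Matrix.one_mulVec]
        have hk1 : ((f - μ • 1) ^ (k + 1)) y = 0 := by
          rw [pow_succ', Module.End.mul_apply, hk, map_zero]
        rw [hrw, ← mulVecLin_pow] at hk1
        have hBy : B *ᵥ y = μ • y := by
          have := aux3 (normal_sub_smul hB μ) k y hk1
          rwa [sub_mulVec, smul_mulVec, one_mulVec, sub_eq_zero] at this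
        have hBay : Bᴴ *ᵥ y = (starRingEnd ℂ μ) • y := adj_eigen hB hBy
        have hSy : A *ᵥ (S *ᵥ y) = μ • (S *ᵥ y) := by
          rw [mulVec_mulVec, hAS, ← mulVec_mulVec, hBy, mulVec_smul]
        have hAay : Aᴴ *ᵥ (S *ᵥ y) = (starRingEnd ℂ μ) • (S *ᵥ y) := adj_eigen hA hSy
        simp only [LinearMap.mem_ker, Matrix.mulVecLin_apply, sub_mulVec, ← mulVec_mulVec,
          hAay, hBay, mulVec_smul, sub_self]
      exact hle Submodule.mem_top
    simpa [Matrix.sub_mulVec] using hx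
  have hzero : Aᴴ * S - S * Bᴴ = 0 := by
    ext i j
    have := congrFun (key (Pi.single j 1)) i
    rw [mulVec_single_one] at this
    simpa using this
  rwa [sub_eq_zero] at hzero

end Stmt13Aux

/-- If two irreducible families of normal complex matrices are simultaneously similar via
`S`, then `S` is a scalar multiple of a unitary matrix. -/
theorem stmt_13 {n : ℕ} {I : Type*}
    (A B : I → Matrix (Fin n) (Fin n) ℂ)
    (hAnormal : ∀ i, A i * (A i)ᴴ = (A i)ᴴ * A i)
    (hBnormal : ∀ i, B i * (B i)ᴴ = (B i)ᴴ * B i)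
    (hAirr : ∀ U : Submodule ℂ (Fin n → ℂ),
      (∀ i, U.map (A i).mulVecLin ≤ U) → U = ⊥ ∨ U = ⊤)
    (hBirr : ∀ U : Submodule ℂ (Fin n → ℂ),
      (∀ i, U.map (B i).mulVecLin ≤ U) → U = ⊥ ∨ U = ⊤)
    (S : Matrix (Fin n) (Fin n) ℂ) (hS : IsUnit S)
    (hsim : ∀ i, S⁻¹ * A i * S = B i) :
    ∃ (c : ℂ) (U : Matrix (Fin n) (Fin n) ℂ),
      U ∈ Matrix.unitaryGroup (Fin n) ℂ ∧ S = c • U := by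
  rcases Nat.eq_zero_or_pos n with hn | hn
  · subst hn
    refine ⟨1, 1, ?_, ?_⟩
    · rw [Matrix.mem_unitaryGroup_iff]; simp
    · rw [one_smul]; ext i j; exact i.elim0
  -- n > 0
  haveI : NeZero n := ⟨hn.ne'⟩
  have hdetS : IsUnit S.det := (Matrix.isUnit_iff_isUnit_det S).mp hS
  have hAS : ∀ i, A i * S = S * B i := by
    intro i
    have := hsim i
    calc A i * S = S * (S⁻¹ * A i * S) := by
          rw [Matrix.mul_assoc, ← Matrix.mul_assoc S S⁻¹, Matrix.mul_nonsing_inv _ hdetS,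
            Matrix.one_mul]
      _ = S * B i := by rw [this]
  have hfug : ∀ i, (A i)ᴴ * S = S * (B i)ᴴ := fun i =>
    Stmt13Aux.fuglede (hAnormal i) (hBnormal i) (hAS i)
  set H := S * Sᴴ with hH
  have hcomm : ∀ i, H * A i = A i * H := by
    intro i
    have h1 : Sᴴ * A i = B i * Sᴴ := by
      have := congrArg Matrix.conjTranspose (hfug i)
      simpa [Matrix.conjTranspose_mul] using this
    calc H * A i = S * (Sᴴ * A i) := by rw [hH, Matrix.mul_assoc]
      _ = (S * B i) * Sᴴ := by rw [h1, Matrix.mul_assoc]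
      _ = (A i * S) * Sᴴ := by rw [hAS i]
      _ = A i * H := by rw [hH, Matrix.mul_assoc]
  -- find an eigenvalue of H
  obtain ⟨α, hα⟩ := Module.End.exists_eigenvalue H.mulVecLin
  set E := Module.End.eigenspace H.mulVecLin α with hE
  have hEne : E ≠ ⊥ := hα
  have hEinv : ∀ i, E.map (A i).mulVecLin ≤ E := by
    intro i x hx
    obtain ⟨y, hy, rfl⟩ := hx
    rw [SetLike.mem_coe] at hy
    rw [Module.End.mem_eigenspace_iff] at hy ⊢
    simp only [Matrix.mulVecLin_apply] at hy ⊢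
    rw [mulVec_mulVec, hcomm i, ← mulVec_mulVec, hy, mulVec_smul]
  have hEtop : E = ⊤ := (hAirr E hEinv).resolve_left hEne
  have hval : ∀ x : Fin n → ℂ, H *ᵥ x = α • x := by
    intro x
    have hx : x ∈ E := hEtop ▸ Submodule.mem_top
    rw [hE, Module.End.mem_eigenspace_iff] at hx
    simpa using hx
  have hH1 : H = α • (1 : Matrix (Fin n) (Fin n) ℂ) := by
    ext i j
    have := congrFun (hval (Pi.single j 1)) i
    rw [mulVec_single_one] at this
    simpa [Matrix.one_apply, Pi.single_apply, eq_comm] using this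
  -- α is a positive real
  set k : Fin n := ⟨0, hn⟩
  have hαt : α = (↑(∑ j, Complex.normSq (S k j)) : ℂ) := by
    have h1 : H k k = α := by rw [hH1]; simp
    have h2 : H k k = ∑ j, (S k j) * star (S k j) := by
      rw [hH, Matrix.mul_apply]
      simp [Matrix.conjTranspose_apply]
    rw [← h1, h2]
    push_cast
    refine Finset.sum_congr rfl fun j _ => ?_
    rw [← Complex.mul_conj]
    rfl
  set t : ℝ := ∑ j, Complex.normSq (S k j) with ht
  have htnn : 0 ≤ t := Finset.sum_nonneg fun j _ => Complex.normSq_nonneg _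
  have hdetH : IsUnit H.det := by
    rw [hH, Matrix.det_mul, Matrix.det_conjTranspose]
    exact hdetS.mul hdetS.star
  have htne : t ≠ 0 := by
    intro h0
    have : H = 0 := by rw [hH1, hαt, h0]; simp
    rw [this, Matrix.det_zero] at hdetH
    exact hdetH.ne_zero rfl
  have htpos : 0 < t := lt_of_le_of_ne htnn (Ne.symm htne)
  set r : ℝ := Real.sqrt t with hr
  have hrpos : 0 < r := Real.sqrt_pos.mpr htpos
  set c : ℂ := (r : ℂ) with hc
  have hcne : c ≠ 0 := by
    simp [hc, Complex.ofReal_ne_zero, hrpos.ne']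
  have hc2 : c * c = α := by
    rw [hc, hαt, ← Complex.ofReal_mul, ← Real.mul_self_sqrt htnn]
  refine ⟨c, c⁻¹ • S, ?_, ?_⟩
  · rw [Matrix.mem_unitaryGroup_iff]
    have hstar : star (c⁻¹ • S) = c⁻¹ • Sᴴ := by
      rw [Matrix.star_eq_conjTranspose, Matrix.conjTranspose_smul]
      congr 1
      rw [← starRingEnd_apply, map_inv₀, hc, Complex.conj_ofReal]
    rw [hstar, Matrix.smul_mul, Matrix.mul_smul, ← hH, hH1, smul_smul, smul_smul]
    have hsc : c⁻¹ * (c⁻¹ * α) = 1 := by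
      rw [← hc2]; field_simp
    have hsc' : c⁻¹ * c⁻¹ * α = 1 := by rw [mul_assoc]; exact hsc
    first
      | rw [hsc, one_smul]
      | rw [hsc', one_smul]
  · rw [smul_smul, mul_inv_cancel₀ hcne, one_smul]
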